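/- arXiv:1312.1045 — 3 statements merged into one kernel-verified Lean document; each statement's English description precedes it below -/
import Mathlib

section
/- Let H, G : ℝⁿ×ℝⁿ → ℝ be C¹ Hamiltonians. If u : ℝ² × ℝⁿ → ℝ, u = u(t,s,x), is C² and satisfies ∂_t u + H(x, D_x u) = 0 and ∂_s u + G(x, D_x u) = 0 on an open set, then at every point of that set the Poisson bracket {H,G}(x, D_x u) := ∂_p H · ∂_x G − ∂_p G · ∂_x H evaluated at (x, D_x u(t,s,x)) equals 0. -/
open Real RealInnerProductSpace

variable {n : ℕ}

open InnerProductSpace ContinuousLinearMap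

set_option maxHeartbeats 1000000

local notation "E" => EuclideanSpace ℝ (Fin n)
local notation "P" => (ℝ × ℝ × EuclideanSpace ℝ (Fin n))

noncomputable def iotaX : (EuclideanSpace ℝ (Fin n)) →L[ℝ] (ℝ × ℝ × EuclideanSpace ℝ (Fin n)) :=
  (ContinuousLinearMap.inr ℝ ℝ (ℝ × EuclideanSpace ℝ (Fin n))).comp
    (ContinuousLinearMap.inr ℝ ℝ (EuclideanSpace ℝ (Fin n)))

@[simp] lemma iotaX_apply (ξ : E) : (iotaX ξ : P) = (0, 0, ξ) := rfl

lemma hasFDerivAt_ins (c d : ℝ) (x : E) :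
    HasFDerivAt (fun y : E => ((c, d, y) : P)) iotaX x := by
  have h : (fun y : E => ((c, d, y) : P)) = fun y => ((c, d, 0) : P) + iotaX y := by
    funext y; simp [Prod.ext_iff]
  rw [h]
  exact iotaX.hasFDerivAt.const_add _

lemma hasFDerivAt_curve_t (s : ℝ) (x : E) (t : ℝ) :
    HasFDerivAt (fun τ : ℝ => ((τ, s, x) : P))
      (ContinuousLinearMap.inl ℝ ℝ (ℝ × EuclideanSpace ℝ (Fin n))) t := by
  have h : (fun τ : ℝ => ((τ, s, x) : P))
      = fun τ => ((0, s, x) : P) + ContinuousLinearMap.inl ℝ ℝ (ℝ × EuclideanSpace ℝ (Fin n)) τ := by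
    funext τ; simp [Prod.ext_iff]
  rw [h]
  exact (ContinuousLinearMap.inl ℝ ℝ (ℝ × EuclideanSpace ℝ (Fin n))).hasFDerivAt.const_add _

noncomputable def jS : ℝ →L[ℝ] (ℝ × ℝ × EuclideanSpace ℝ (Fin n)) :=
  (ContinuousLinearMap.inr ℝ ℝ (ℝ × EuclideanSpace ℝ (Fin n))).comp
    (ContinuousLinearMap.inl ℝ ℝ (EuclideanSpace ℝ (Fin n)))

@[simp] lemma jS_apply (σ : ℝ) : (jS σ : P) = (0, σ, 0) := rfl

lemma hasFDerivAt_curve_s (t : ℝ) (x : E) (s : ℝ) :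
    HasFDerivAt (fun σ : ℝ => ((t, σ, x) : P)) jS s := by
  have h : (fun σ : ℝ => ((t, σ, x) : P)) = fun σ => ((t, 0, x) : P) + jS σ := by
    funext σ; simp [Prod.ext_iff]
  rw [h]
  exact jS.hasFDerivAt.const_add _

lemma hasFDerivAt_slot1 (p x : E) :
    HasFDerivAt (fun y : E => ((y, p) : EuclideanSpace ℝ (Fin n) × EuclideanSpace ℝ (Fin n)))
      (ContinuousLinearMap.inl ℝ (EuclideanSpace ℝ (Fin n)) (EuclideanSpace ℝ (Fin n))) x := by
  have h : (fun y : E => ((y, p) : EuclideanSpace ℝ (Fin n) × EuclideanSpace ℝ (Fin n)))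
      = fun y => ((0, p) : EuclideanSpace ℝ (Fin n) × EuclideanSpace ℝ (Fin n))
          + ContinuousLinearMap.inl ℝ (EuclideanSpace ℝ (Fin n)) (EuclideanSpace ℝ (Fin n)) y := by
    funext y; simp [Prod.ext_iff]
  rw [h]
  exact (ContinuousLinearMap.inl ℝ (EuclideanSpace ℝ (Fin n)) (EuclideanSpace ℝ (Fin n))).hasFDerivAt.const_add _

lemma hasFDerivAt_slot2 (x p : E) :
    HasFDerivAt (fun q : E => ((x, q) : EuclideanSpace ℝ (Fin n) × EuclideanSpace ℝ (Fin n)))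
      (ContinuousLinearMap.inr ℝ (EuclideanSpace ℝ (Fin n)) (EuclideanSpace ℝ (Fin n))) p := by
  have h : (fun q : E => ((x, q) : EuclideanSpace ℝ (Fin n) × EuclideanSpace ℝ (Fin n)))
      = fun q => ((x, 0) : EuclideanSpace ℝ (Fin n) × EuclideanSpace ℝ (Fin n))
          + ContinuousLinearMap.inr ℝ (EuclideanSpace ℝ (Fin n)) (EuclideanSpace ℝ (Fin n)) q := by
    funext q; simp [Prod.ext_iff]
  rw [h]
  exact (ContinuousLinearMap.inr ℝ (EuclideanSpace ℝ (Fin n)) (EuclideanSpace ℝ (Fin n))).hasFDerivAt.const_add _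

/-- Splitting of the full derivative of a C¹ Hamiltonian into partial gradients. -/
lemma fderiv_split (H : E → E → ℝ)
    (hH : ContDiff ℝ 1 fun q : EuclideanSpace ℝ (Fin n) × EuclideanSpace ℝ (Fin n) => H q.1 q.2)
    (x p a b : E) :
    fderiv ℝ (fun q : EuclideanSpace ℝ (Fin n) × EuclideanSpace ℝ (Fin n) => H q.1 q.2) (x, p) (a, b)
      = ⟪gradient (fun y => H y p) x, a⟫ + ⟪gradient (fun q => H x q) p, b⟫ := by
  set Hf := fun q : EuclideanSpace ℝ (Fin n) × EuclideanSpace ℝ (Fin n) => H q.1 q.2 with hHf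
  have hd : HasFDerivAt Hf (fderiv ℝ Hf (x, p)) (x, p) :=
    (hH.differentiable one_ne_zero (x, p)).hasFDerivAt
  have h1 : HasFDerivAt (fun y => H y p)
      ((fderiv ℝ Hf (x, p)).comp (ContinuousLinearMap.inl ℝ (EuclideanSpace ℝ (Fin n)) (EuclideanSpace ℝ (Fin n)))) x :=
    (hd.comp x (hasFDerivAt_slot1 p x) :)
  have h2 : HasFDerivAt (fun q => H x q)
      ((fderiv ℝ Hf (x, p)).comp (ContinuousLinearMap.inr ℝ (EuclideanSpace ℝ (Fin n)) (EuclideanSpace ℝ (Fin n)))) p :=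
    (hd.comp p (hasFDerivAt_slot2 x p) :)
  have g1 : ⟪gradient (fun y => H y p) x, a⟫ = fderiv ℝ Hf (x, p) (a, 0) := by
    rw [gradient, h1.fderiv, toDual_symm_apply]
    rfl
  have g2 : ⟪gradient (fun q => H x q) p, b⟫ = fderiv ℝ Hf (x, p) (0, b) := by
    rw [gradient, h2.fderiv, toDual_symm_apply]
    rfl
  rw [g1, g2, ← ContinuousLinearMap.map_add]
  congr 1
  simp [Prod.ext_iff]


/-- Partial gradient of a Hamiltonian in the base variable `x`. -/
noncomputable def gradX (H : EuclideanSpace ℝ (Fin n) → EuclideanSpace ℝ (Fin n) → ℝ)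
    (x p : EuclideanSpace ℝ (Fin n)) : EuclideanSpace ℝ (Fin n) :=
  gradient (fun y => H y p) x

/-- Partial gradient of a Hamiltonian in the momentum variable `p`. -/
noncomputable def gradP (H : EuclideanSpace ℝ (Fin n) → EuclideanSpace ℝ (Fin n) → ℝ)
    (x p : EuclideanSpace ℝ (Fin n)) : EuclideanSpace ℝ (Fin n) :=
  gradient (fun q => H x q) p

/-- The Poisson bracket `{H,G} = ∂_p H · ∂_x G − ∂_p G · ∂_x H`. -/
noncomputable def poissonBracket (H G : EuclideanSpace ℝ (Fin n) → EuclideanSpace ℝ (Fin n) → ℝ)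
    (x p : EuclideanSpace ℝ (Fin n)) : ℝ :=
  ⟪gradP H x p, gradX G x p⟫ - ⟪gradP G x p, gradX H x p⟫

/-- If a `C²` function `u(t,s,x)` solves both `∂ₜu + H(x,Dₓu) = 0` and
`∂ₛu + G(x,Dₓu) = 0` on an open set, then `{H,G}(x, Dₓu) = 0` there. -/
theorem stmt13
    (H G : EuclideanSpace ℝ (Fin n) → EuclideanSpace ℝ (Fin n) → ℝ)
    (hH : ContDiff ℝ 1 fun q : EuclideanSpace ℝ (Fin n) × EuclideanSpace ℝ (Fin n) => H q.1 q.2)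
    (hG : ContDiff ℝ 1 fun q : EuclideanSpace ℝ (Fin n) × EuclideanSpace ℝ (Fin n) => G q.1 q.2)
    (u : ℝ × ℝ × EuclideanSpace ℝ (Fin n) → ℝ)
    (hu : ContDiff ℝ 2 u)
    (Ω : Set (ℝ × ℝ × EuclideanSpace ℝ (Fin n))) (hΩ : IsOpen Ω)
    (heqH : ∀ q ∈ Ω, deriv (fun τ => u (τ, q.2.1, q.2.2)) q.1
        + H q.2.2 (gradient (fun y => u (q.1, q.2.1, y)) q.2.2) = 0)
    (heqG : ∀ q ∈ Ω, deriv (fun σ => u (q.1, σ, q.2.2)) q.2.1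
        + G q.2.2 (gradient (fun y => u (q.1, q.2.1, y)) q.2.2) = 0) :
    ∀ q ∈ Ω, poissonBracket H G q.2.2 (gradient (fun y => u (q.1, q.2.1, y)) q.2.2) = 0 := by
  have hud : Differentiable ℝ u := hu.differentiable (by norm_num)
  have hu1 : ContDiff ℝ 1 (fderiv ℝ u) := hu.fderiv_right (by norm_num)
  set D : (ℝ × ℝ × EuclideanSpace ℝ (Fin n)) → ((ℝ × ℝ × EuclideanSpace ℝ (Fin n)) →L[ℝ] ℝ) :=
    fderiv ℝ u with hDdef
  set w : (ℝ × ℝ × EuclideanSpace ℝ (Fin n)) → EuclideanSpace ℝ (Fin n) :=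
    fun q => (toDual ℝ (EuclideanSpace ℝ (Fin n))).symm ((D q).comp iotaX) with hwdef
  have hwc : ContDiff ℝ 1 w :=
    ((toDual ℝ (EuclideanSpace ℝ (Fin n))).symm.contDiff).comp (hu1.clm_comp contDiff_const)
  -- the gradient in the statement is `w`
  have hgrad : ∀ q : P, gradient (fun y => u (q.1, q.2.1, y)) q.2.2 = w q := by
    intro q
    have h1 : HasFDerivAt (fun y => u (q.1, q.2.1, y)) ((D q).comp iotaX) q.2.2 :=
      ((hud (q.1, q.2.1, q.2.2)).hasFDerivAt).comp q.2.2 (hasFDerivAt_ins q.1 q.2.1 q.2.2)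
    rw [gradient, h1.fderiv]
  -- the PDEs, in fderiv form
  have heqH' : ∀ p ∈ Ω, D p ((1:ℝ), (0:ℝ), (0:E)) + H p.2.2 (w p) = 0 := by
    intro p hp
    have hder : HasDerivAt (fun τ => u (τ, p.2.1, p.2.2)) (D p ((1:ℝ), (0:ℝ), (0:E))) p.1 :=
      ((hud (p.1, p.2.1, p.2.2)).hasFDerivAt).comp_hasDerivAt p.1
        ((hasFDerivAt_curve_t p.2.1 p.2.2 p.1).hasDerivAt)
    have h := heqH p hp
    rwa [hder.deriv, hgrad p] at h
  have heqG' : ∀ p ∈ Ω, D p ((0:ℝ), (1:ℝ), (0:E)) + G p.2.2 (w p) = 0 := by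
    intro p hp
    have hder : HasDerivAt (fun σ => u (p.1, σ, p.2.2)) (D p ((0:ℝ), (1:ℝ), (0:E))) p.2.1 :=
      ((hud (p.1, p.2.1, p.2.2)).hasFDerivAt).comp_hasDerivAt p.2.1
        ((hasFDerivAt_curve_s p.1 p.2.2 p.2.1).hasDerivAt)
    have h := heqG p hp
    rwa [hder.deriv, hgrad p] at h
  intro q₀ hq₀
  rw [hgrad q₀]
  -- notation
  set x₀ : E := q₀.2.2 with hx₀
  set p₀ : E := w q₀ with hp₀
  set et : P := ((1:ℝ), (0:ℝ), (0:E)) with het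
  set es : P := ((0:ℝ), (1:ℝ), (0:E)) with hes
  set D2 : (ℝ × ℝ × EuclideanSpace ℝ (Fin n)) →L[ℝ]
      (ℝ × ℝ × EuclideanSpace ℝ (Fin n)) →L[ℝ] ℝ := fderiv ℝ D q₀ with hD2def
  have hD2 : HasFDerivAt D D2 q₀ := (hu1.differentiable one_ne_zero q₀).hasFDerivAt
  have happly : ∀ c : P, HasFDerivAt (fun q => D q c)
      ((ContinuousLinearMap.apply ℝ ℝ c).comp D2) q₀ :=
    fun c => ((ContinuousLinearMap.apply ℝ ℝ c).hasFDerivAt).comp q₀ hD2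
  set W : (ℝ × ℝ × EuclideanSpace ℝ (Fin n)) →L[ℝ] EuclideanSpace ℝ (Fin n) :=
    fderiv ℝ w q₀ with hWdef
  have hwd : HasFDerivAt w W q₀ := (hwc.differentiable one_ne_zero q₀).hasFDerivAt
  set π2 : (ℝ × ℝ × EuclideanSpace ℝ (Fin n)) →L[ℝ] EuclideanSpace ℝ (Fin n) :=
    (ContinuousLinearMap.snd ℝ ℝ (EuclideanSpace ℝ (Fin n))).comp
      (ContinuousLinearMap.snd ℝ ℝ (ℝ × EuclideanSpace ℝ (Fin n))) with hπ2
  have hgpair : HasFDerivAt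
      (fun q : P => ((q.2.2, w q) : EuclideanSpace ℝ (Fin n) × EuclideanSpace ℝ (Fin n)))
      (π2.prod W) q₀ := HasFDerivAt.prodMk (π2.hasFDerivAt) hwd
  set DH : (EuclideanSpace ℝ (Fin n) × EuclideanSpace ℝ (Fin n)) →L[ℝ] ℝ :=
    fderiv ℝ (fun q : EuclideanSpace ℝ (Fin n) × EuclideanSpace ℝ (Fin n) => H q.1 q.2) (x₀, p₀)
    with hDHdef
  set DG : (EuclideanSpace ℝ (Fin n) × EuclideanSpace ℝ (Fin n)) →L[ℝ] ℝ :=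
    fderiv ℝ (fun q : EuclideanSpace ℝ (Fin n) × EuclideanSpace ℝ (Fin n) => G q.1 q.2) (x₀, p₀)
    with hDGdef
  have hHcomp : HasFDerivAt (fun q : P => H q.2.2 (w q)) (DH.comp (π2.prod W)) q₀ :=
    (((hH.differentiable one_ne_zero (x₀, p₀)).hasFDerivAt).comp q₀ hgpair :)
  have hGcomp : HasFDerivAt (fun q : P => G q.2.2 (w q)) (DG.comp (π2.prod W)) q₀ :=
    (((hG.differentiable one_ne_zero (x₀, p₀)).hasFDerivAt).comp q₀ hgpair :)
  -- the total derivatives of the two PDE residuals vanish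
  have hFH0 : ((ContinuousLinearMap.apply ℝ ℝ et).comp D2) + DH.comp (π2.prod W) = 0 := by
    have hFH : HasFDerivAt (fun q : P => D q et + H q.2.2 (w q))
        (((ContinuousLinearMap.apply ℝ ℝ et).comp D2) + DH.comp (π2.prod W)) q₀ :=
      (happly et).add hHcomp
    have hev : (fun q : P => D q et + H q.2.2 (w q)) =ᶠ[nhds q₀] fun _ => (0:ℝ) :=
      Filter.eventuallyEq_of_mem (hΩ.mem_nhds hq₀) heqH'
    have h0 := hFH.congr_of_eventuallyEq hev.symm
    exact h0.unique (hasFDerivAt_const 0 q₀)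
  have hFG0 : ((ContinuousLinearMap.apply ℝ ℝ es).comp D2) + DG.comp (π2.prod W) = 0 := by
    have hFG : HasFDerivAt (fun q : P => D q es + G q.2.2 (w q))
        (((ContinuousLinearMap.apply ℝ ℝ es).comp D2) + DG.comp (π2.prod W)) q₀ :=
      (happly es).add hGcomp
    have hev : (fun q : P => D q es + G q.2.2 (w q)) =ᶠ[nhds q₀] fun _ => (0:ℝ) :=
      Filter.eventuallyEq_of_mem (hΩ.mem_nhds hq₀) heqG'
    have h0 := hFG.congr_of_eventuallyEq hev.symm
    exact h0.unique (hasFDerivAt_const 0 q₀)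
  have eqH : ∀ v : P, D2 v et + DH (v.2.2, W v) = 0 := by
    intro v
    have h := ContinuousLinearMap.ext_iff.mp hFH0 v
    simpa only [ContinuousLinearMap.add_apply, ContinuousLinearMap.coe_comp',
      Function.comp_apply, ContinuousLinearMap.apply_apply, ContinuousLinearMap.prod_apply,
      ContinuousLinearMap.coe_snd', ContinuousLinearMap.zero_apply, hπ2] using h
  have eqG : ∀ v : P, D2 v es + DG (v.2.2, W v) = 0 := by
    intro v
    have h := ContinuousLinearMap.ext_iff.mp hFG0 v
    simpa only [ContinuousLinearMap.add_apply, ContinuousLinearMap.coe_comp',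
      Function.comp_apply, ContinuousLinearMap.apply_apply, ContinuousLinearMap.prod_apply,
      ContinuousLinearMap.coe_snd', ContinuousLinearMap.zero_apply, hπ2] using h
  -- the mixed-derivative identity for `w`
  have hWD : ∀ (ξ : E) (v : P), ⟪ξ, W v⟫ = D2 v (iotaX ξ) := by
    intro ξ
    have h1 : HasFDerivAt (fun q : P => ⟪ξ, w q⟫) ((innerSL ℝ ξ).comp W) q₀ :=
      ((innerSL ℝ ξ).hasFDerivAt).comp q₀ hwd
    have hfeq : (fun q : P => ⟪ξ, w q⟫) = fun q : P => D q (iotaX ξ) := by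
      funext q
      rw [real_inner_comm]
      exact toDual_symm_apply
    rw [hfeq] at h1
    have h2 := h1.unique (happly (iotaX ξ))
    intro v
    have h := ContinuousLinearMap.ext_iff.mp h2 v
    simpa only [ContinuousLinearMap.coe_comp', Function.comp_apply, innerSL_apply_apply,
      ContinuousLinearMap.apply_apply] using h
  -- splitting of DH, DG into partial gradients
  have hDHs : ∀ a b : E, DH (a, b) = ⟪gradX H x₀ p₀, a⟫ + ⟪gradP H x₀ p₀, b⟫ := by
    intro a b
    rw [hDHdef, gradX, gradP]
    exact fderiv_split H hH x₀ p₀ a b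
  have hDGs : ∀ a b : E, DG (a, b) = ⟪gradX G x₀ p₀, a⟫ + ⟪gradP G x₀ p₀, b⟫ := by
    intro a b
    rw [hDGdef, gradX, gradP]
    exact fderiv_split G hG x₀ p₀ a b
  -- symmetry of the second derivative
  have hsymm : ∀ a b : P, D2 a b = D2 b a := fun a b =>
    second_derivative_symmetric (fun y => (hud y).hasFDerivAt) hD2 a b
  set ξH : E := gradP H x₀ p₀ with hξH
  set ξG : E := gradP G x₀ p₀ with hξG
  set ηH : E := gradX H x₀ p₀ with hηH
  set ηG : E := gradX G x₀ p₀ with hηG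
  -- the four scalar equations
  have e1 : D2 es et + D2 es (iotaX ξH) = 0 := by
    have h := eqH es
    rwa [show es.2.2 = (0:E) from rfl, hDHs, inner_zero_right, hWD, zero_add] at h
  have e2 : D2 et es + D2 et (iotaX ξG) = 0 := by
    have h := eqG et
    rwa [show et.2.2 = (0:E) from rfl, hDGs, inner_zero_right, hWD, zero_add] at h
  have e3 : D2 (iotaX ξH) es + (⟪ηG, ξH⟫ + D2 (iotaX ξH) (iotaX ξG)) = 0 := by
    have h := eqG (iotaX ξH)
    rwa [show (iotaX ξH).2.2 = ξH from rfl, hDGs, hWD] at h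
  have e4 : D2 (iotaX ξG) et + (⟪ηH, ξG⟫ + D2 (iotaX ξG) (iotaX ξH)) = 0 := by
    have h := eqH (iotaX ξG)
    rwa [show (iotaX ξG).2.2 = ξG from rfl, hDHs, hWD] at h
  have s1 := hsymm es et
  have s2 := hsymm es (iotaX ξH)
  have s3 := hsymm et (iotaX ξG)
  have s4 := hsymm (iotaX ξH) (iotaX ξG)
  have c1 : ⟪ξH, ηG⟫ = ⟪ηG, ξH⟫ := real_inner_comm _ _
  have c2 : ⟪ξG, ηH⟫ = ⟪ηH, ξG⟫ := real_inner_comm _ _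
  rw [poissonBracket, ← hξH, ← hξG, ← hηH, ← hηG]
  linarith [e1, e2, e3, e4, s1, s2, s3, s4, c1, c2]
end

section
/- Let f : ℝⁿ → ℝ. If f is both semiconcave with linear modulus (f − C|·|²/2 is concave for some C ≥ 0) and semiconvex with linear modulus (f + C|·|²/2 is convex for some C ≥ 0), then f is differentiable everywhere and its gradient is Lipschitz continuous (f is C^{1,1}). -/
open Set InnerProductSpace
open scoped RealInnerProductSpace

/-- Every convex function on a finite-dimensional real inner product space has a
subgradient at every point. -/
lemma exists_subgradient_aux {E : Type*} [NormedAddCommGroup E] [InnerProductSpace ℝ E]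
    [FiniteDimensional ℝ E] (h : E → ℝ) (hconv : ConvexOn ℝ Set.univ h) (x : E) :
    ∃ q : E, ∀ y, h x + ⟪q, y - x⟫_ℝ ≤ h y := by
  have hcont : Continuous h := hconv.locallyLipschitz.continuous
  set S : Set (E × ℝ) := {p | h p.1 < p.2} with hS
  have hSconv : Convex ℝ S := by
    have := hconv.convex_strict_epigraph
    simpa [hS] using this
  have hSopen : IsOpen S := by
    have : S = {p : E × ℝ | 0 < p.2 - h p.1} := by ext p; simp [hS, sub_pos]
    rw [this]
    exact isOpen_lt continuous_const (continuous_snd.sub (hcont.comp continuous_fst))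
  have hdisj : Disjoint S {(x, h x)} := by simp [Set.disjoint_singleton_right, hS]
  obtain ⟨L, u, hLS, hLx⟩ := geometric_hahn_banach_open hSconv hSopen (convex_singleton _) hdisj
  have hux : u ≤ L (x, h x) := hLx _ rfl
  set c : ℝ := L (0, 1) with hc
  have hkey : ∀ (y : E) (r : ℝ), L (y, r) = L (y, 0) + r * c := by
    intro y r
    have h1 : (y, r) = (y, (0 : ℝ)) + r • ((0 : E), (1 : ℝ)) := by
      simp [Prod.ext_iff]
    rw [h1, map_add, map_smul, smul_eq_mul, hc]
  have hcneg : c < 0 := by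
    have h1 : L (x, h x + 1) < u := hLS _ (by simp [hS])
    have h2 := hkey x (h x + 1)
    have h3 := hkey x (h x)
    nlinarith
  have hyle : ∀ y : E, L (y, 0) + h y * c ≤ u := by
    intro y
    have hlt : ∀ ε > (0 : ℝ), L (y, 0) + h y * c < u + ε * (-c) := by
      intro ε hε
      have h1 : L (y, h y + ε) < u := hLS _ (by simp [hS, hε])
      rw [hkey] at h1
      nlinarith
    by_contra hcon
    push_neg at hcon
    have hδ : (L (y, 0) + h y * c - u) / (-c) > 0 := by
      apply div_pos (by linarith) (by linarith)
    have := hlt _ hδ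
    rw [div_mul_cancel₀ _ (by linarith : (-c) ≠ 0)] at this
    linarith
  set ℓ : E →L[ℝ] ℝ := (-c)⁻¹ • (L.comp (ContinuousLinearMap.inl ℝ E ℝ)) with hℓ
  refine ⟨(toDual ℝ E).symm ℓ, fun y => ?_⟩
  have hq : ⟪(toDual ℝ E).symm ℓ, y - x⟫_ℝ = (-c)⁻¹ * L (y - x, 0) := by
    rw [toDual_symm_apply]; simp [hℓ]
  have hlin : L (y - x, 0) = L (y, 0) - L (x, 0) := by
    have : (y - x, (0 : ℝ)) = (y, (0 : ℝ)) - (x, (0 : ℝ)) := by simp [Prod.ext_iff]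
    rw [this, map_sub]
  have h4 := hyle y
  have h5 := hkey x (h x)
  have h6 : L (x, 0) + h x * c ≥ u := by rw [← h5]; exact hux
  have hcne : (-c) ≠ 0 := by intro hcc; rw [neg_eq_zero] at hcc; exact (ne_of_lt hcneg) hcc
  have h7 : ⟪(toDual ℝ E).symm ℓ, y - x⟫_ℝ * (-c) = L (y, 0) - L (x, 0) := by
    rw [hq, hlin, mul_comm, ← mul_assoc, mul_inv_cancel₀ hcne, one_mul]
  nlinarith [h7]

set_option maxHeartbeats 1000000 in
/-- A function on `ℝⁿ` that is both semiconcave and semiconvex with linear modulus is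
`C^{1,1}`: differentiable everywhere with Lipschitz gradient. -/
theorem stmt16 {n : ℕ} (f : EuclideanSpace ℝ (Fin n) → ℝ)
    (C C' : ℝ) (hC : 0 ≤ C) (hC' : 0 ≤ C')
    (hconc : ConcaveOn ℝ Set.univ (fun x => f x - C / 2 * ‖x‖ ^ 2))
    (hconv : ConvexOn ℝ Set.univ (fun x => f x + C' / 2 * ‖x‖ ^ 2)) :
    Differentiable ℝ f ∧ ∃ K : NNReal, LipschitzWith K (fun x => gradient f x) := by
  set K : ℝ := C + C' + 1 with hK
  have hKpos : 0 < K := by positivity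
  -- subgradients of the convex part
  have hsub : ∀ x : EuclideanSpace ℝ (Fin n), ∃ q : EuclideanSpace ℝ (Fin n), ∀ y,
      (f x + C' / 2 * ‖x‖ ^ 2) + ⟪q, y - x⟫_ℝ ≤ f y + C' / 2 * ‖y‖ ^ 2 :=
    fun x => exists_subgradient_aux _ hconv x
  choose q hq using hsub
  set a : EuclideanSpace ℝ (Fin n) → EuclideanSpace ℝ (Fin n) :=
    fun x => q x - C' • x with ha
  -- lower quadratic bound
  have hlow : ∀ x v : EuclideanSpace ℝ (Fin n),
      f x + ⟪a x, v⟫_ℝ - C' / 2 * ‖v‖ ^ 2 ≤ f (x + v) := by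
    intro x v
    have h1 := hq x (x + v)
    simp only [add_sub_cancel_left] at h1
    have h2 : ‖x + v‖ ^ 2 = ‖x‖ ^ 2 + 2 * ⟪x, v⟫_ℝ + ‖v‖ ^ 2 := norm_add_sq_real x v
    have h3 : ⟪a x, v⟫_ℝ = ⟪q x, v⟫_ℝ - C' * ⟪x, v⟫_ℝ := by
      simp only [ha, inner_sub_left, real_inner_smul_left]
    nlinarith
  -- midpoint upper bound from semiconcavity
  have hsym : ∀ x v : EuclideanSpace ℝ (Fin n),
      f (x + v) + f (x - v) ≤ 2 * f x + C * ‖v‖ ^ 2 := by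
    intro x v
    have h1 := hconc.2 (Set.mem_univ (x + v)) (Set.mem_univ (x - v))
      (by norm_num : (0:ℝ) ≤ 1/2) (by norm_num : (0:ℝ) ≤ 1/2) (by norm_num)
    have hmid : (1/2 : ℝ) • (x + v) + (1/2 : ℝ) • (x - v) = x := by
      rw [smul_add, smul_sub]
      module
    rw [hmid] at h1
    simp only [smul_eq_mul] at h1
    have h2 : ‖x + v‖ ^ 2 = ‖x‖ ^ 2 + 2 * ⟪x, v⟫_ℝ + ‖v‖ ^ 2 := norm_add_sq_real x v
    have h3 : ‖x - v‖ ^ 2 = ‖x‖ ^ 2 - 2 * ⟪x, v⟫_ℝ + ‖v‖ ^ 2 := norm_sub_sq_real x v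
    nlinarith
  -- upper quadratic bound
  have hup : ∀ x v : EuclideanSpace ℝ (Fin n),
      f (x + v) ≤ f x + ⟪a x, v⟫_ℝ + (C + C' / 2) * ‖v‖ ^ 2 := by
    intro x v
    have h1 := hlow x (-v)
    rw [inner_neg_right, norm_neg, ← sub_eq_add_neg x v] at h1
    have h2 := hsym x v
    linarith
  -- two-sided bound
  have habs : ∀ x v : EuclideanSpace ℝ (Fin n),
      |f (x + v) - f x - ⟪a x, v⟫_ℝ| ≤ K * ‖v‖ ^ 2 := by
    intro x v
    rw [abs_le]
    have h1 := hlow x v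
    have h2 := hup x v
    have h3 : (0:ℝ) ≤ ‖v‖ ^ 2 := by positivity
    constructor <;> nlinarith
  -- differentiability with explicit gradient
  have hgrad : ∀ x : EuclideanSpace ℝ (Fin n), HasGradientAt f (a x) x := by
    intro x
    rw [hasGradientAt_iff_hasFDerivAt, hasFDerivAt_iff_isLittleO_nhds_zero]
    rw [Asymptotics.isLittleO_iff]
    intro ε hε
    filter_upwards [Metric.ball_mem_nhds (0 : EuclideanSpace ℝ (Fin n))
      (show 0 < ε / K by positivity)] with v hv
    simp only [Metric.mem_ball, dist_zero_right] at hv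
    have h1 : ‖f (x + v) - f x - (toDual ℝ (EuclideanSpace ℝ (Fin n))) (a x) v‖
        ≤ K * ‖v‖ ^ 2 := by
      rw [toDual_apply_apply, Real.norm_eq_abs]
      exact habs x v
    calc ‖f (x + v) - f x - (toDual ℝ (EuclideanSpace ℝ (Fin n))) (a x) v‖
        ≤ K * ‖v‖ ^ 2 := h1
      _ = K * ‖v‖ * ‖v‖ := by ring
      _ ≤ K * (ε / K) * ‖v‖ := by
          apply mul_le_mul_of_nonneg_right _ (norm_nonneg v)
          exact mul_le_mul_of_nonneg_left hv.le hKpos.le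
      _ = ε * ‖v‖ := by field_simp
  have hdiff : Differentiable ℝ f := fun x =>
    ((hasGradientAt_iff_hasFDerivAt.mp (hgrad x)).differentiableAt)
  have hgradeq : ∀ x : EuclideanSpace ℝ (Fin n), gradient f x = a x := fun x =>
    (hgrad x).gradient
  -- key inequality for the Lipschitz estimate
  have key3 : ∀ x y z : EuclideanSpace ℝ (Fin n),
      ⟪a x - a y, z⟫_ℝ ≤ K * (‖y - x + z‖ ^ 2 + ‖z‖ ^ 2 + ‖y - x‖ ^ 2) := by
    intro x y z
    have hA := (abs_le.mp (habs x (y - x + z))).1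
    have hB := (abs_le.mp (habs y z)).2
    have hC2 := (abs_le.mp (habs x (y - x))).2
    have e1 : x + (y - x + z) = y + z := by abel
    have e2 : x + (y - x) = y := by abel
    rw [e1] at hA
    rw [e2] at hC2
    have e3 : ⟪a x, y - x + z⟫_ℝ = ⟪a x, y - x⟫_ℝ + ⟪a x, z⟫_ℝ := inner_add_right _ _ _
    have e4 : ⟪a x - a y, z⟫_ℝ = ⟪a x, z⟫_ℝ - ⟪a y, z⟫_ℝ := inner_sub_left _ _ _
    linarith
  -- Lipschitz bound on a
  have hlip : ∀ x y : EuclideanSpace ℝ (Fin n), ‖a x - a y‖ ≤ 6 * K * ‖x - y‖ := by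
    intro x y
    set u : EuclideanSpace ℝ (Fin n) := a x - a y with hu
    set d : EuclideanSpace ℝ (Fin n) := y - x with hd
    have hdn : ‖x - y‖ = ‖d‖ := by rw [hd, norm_sub_rev]
    rw [hdn]
    rcases eq_or_ne u 0 with h0 | h0
    · rw [h0, norm_zero]; positivity
    · have hun : 0 < ‖u‖ := norm_pos_iff.mpr h0
      rcases eq_or_ne d 0 with hd0 | hd0
      · exfalso
        have h1 := key3 x y ((1 / (4 * K)) • u)
        rw [← hd, ← hu, hd0, zero_add, norm_zero] at h1
        have h2 : ⟪u, (1 / (4 * K)) • u⟫_ℝ = (1 / (4 * K)) * ‖u‖ ^ 2 := by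
          rw [real_inner_smul_right, real_inner_self_eq_norm_sq]
        rw [h2] at h1
        have h3 : ‖(1 / (4 * K)) • u‖ ^ 2 = (1 / (4 * K)) ^ 2 * ‖u‖ ^ 2 := by
          rw [norm_smul, Real.norm_eq_abs, abs_of_pos (by positivity)]
          ring
        rw [h3] at h1
        have h4 : 0 < (1 / (4 * K)) := by positivity
        have h5 : K * (1 / (4 * K)) = 1 / 4 := by field_simp
        nlinarith [mul_pos h4 (mul_pos hun hun)]
      · have hdn2 : 0 < ‖d‖ := norm_pos_iff.mpr hd0
        set t : ℝ := ‖d‖ / ‖u‖ with ht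
        have htpos : 0 < t := by positivity
        have h1 := key3 x y (t • u)
        rw [← hd, ← hu] at h1
        have h2 : ⟪u, t • u⟫_ℝ = ‖d‖ * ‖u‖ := by
          rw [real_inner_smul_right, real_inner_self_eq_norm_sq, ht]
          field_simp
        have h3 : ‖t • u‖ = ‖d‖ := by
          rw [norm_smul, Real.norm_eq_abs, abs_of_pos htpos, ht]
          field_simp
        have h4 : ‖d + t • u‖ ^ 2 ≤ 4 * ‖d‖ ^ 2 := by
          have h5 := norm_add_le d (t • u)
          rw [h3] at h5
          nlinarith [norm_nonneg (d + t • u)]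
        rw [h2, h3] at h1
        have h6 : K * (‖d + t • u‖ ^ 2 + ‖d‖ ^ 2 + ‖d‖ ^ 2) ≤ 6 * K * ‖d‖ ^ 2 := by
          nlinarith [mul_le_mul_of_nonneg_left h4 hKpos.le]
        have h7 : ‖d‖ * ‖u‖ ≤ 6 * K * ‖d‖ ^ 2 := le_trans h1 h6
        nlinarith [mul_pos hdn2 hdn2]
  refine ⟨hdiff, ⟨Real.toNNReal (6 * K), ?_⟩⟩
  apply LipschitzWith.of_dist_le_mul
  intro x y
  rw [dist_eq_norm, dist_eq_norm, hgradeq, hgradeq]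
  rw [Real.coe_toNNReal _ (by positivity)]
  exact hlip x y
end

section
/- Let F : ℝⁿ×ℝⁿ → ℝ be continuous and coercive in p uniformly in x (inf_x F(x,p) → +∞ as |p| → ∞). If u is a continuous viscosity subsolution of F(x, D u) ≤ M on ℝⁿ for some constant M (i.e., F(x, Dφ(x)) ≤ M whenever φ is C¹ and u−φ has a local max at x), then u is Lipschitz continuous with a Lipschitz constant depending only on M and F. -/
private lemma stmt17_grad {n : ℕ} (x : EuclideanSpace ℝ (Fin n)) (δ lam r L A : ℝ)
    (hδ : 0 < δ) (z : EuclideanSpace ℝ (Fin n)) :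
    HasGradientAt (fun w : EuclideanSpace ℝ (Fin n) =>
        L * Real.sqrt (‖w - x‖^2 + δ) + A * Real.exp (lam * (‖w - x‖^2 - r^2)))
      ((2 * (L * (1 / (2 * Real.sqrt (‖z - x‖^2 + δ)))
          + A * (Real.exp (lam * (‖z - x‖^2 - r^2)) * lam))) • (z - x)) z := by
  have h1 : HasFDerivAt (fun w : EuclideanSpace ℝ (Fin n) => w - x)
      (ContinuousLinearMap.id ℝ (EuclideanSpace ℝ (Fin n))) z :=
    (hasFDerivAt_id z).sub_const x
  have h2 : HasFDerivAt (fun w : EuclideanSpace ℝ (Fin n) => ‖w - x‖^2)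
      (2 • (innerSL ℝ (z - x)).comp (ContinuousLinearMap.id ℝ (EuclideanSpace ℝ (Fin n)))) z :=
    h1.norm_sq
  have hne : ‖z - x‖^2 + δ ≠ 0 := by positivity
  have h3 : HasDerivAt (fun t : ℝ => Real.sqrt (t + δ))
      (1 / (2 * Real.sqrt (‖z - x‖^2 + δ))) (‖z - x‖^2) := by
    simpa [Function.comp_def] using (Real.hasDerivAt_sqrt hne).comp (‖z - x‖^2) ((hasDerivAt_id _).add_const δ)
  have h4 : HasDerivAt (fun t : ℝ => Real.exp (lam * (t - r^2)))
      (Real.exp (lam * (‖z - x‖^2 - r^2)) * lam) (‖z - x‖^2) := by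
    have hin : HasDerivAt (fun t : ℝ => lam * (t - r^2)) lam (‖z - x‖^2) := by
      simpa using ((hasDerivAt_id (‖z - x‖^2)).sub_const (r^2)).const_mul lam
    simpa [Function.comp_def] using (Real.hasDerivAt_exp _).comp (‖z - x‖^2) hin
  have h5 : HasDerivAt (fun t : ℝ => L * Real.sqrt (t + δ) + A * Real.exp (lam * (t - r^2)))
      (L * (1 / (2 * Real.sqrt (‖z - x‖^2 + δ)))
        + A * (Real.exp (lam * (‖z - x‖^2 - r^2)) * lam)) (‖z - x‖^2) :=
    (h3.const_mul L).add (h4.const_mul A)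
  have h6 := h5.comp_hasFDerivAt z h2
  rw [hasGradientAt_iff_hasFDerivAt]
  refine h6.congr_fderiv ?_
  ext w
  simp [real_inner_smul_left, real_inner_smul_right, InnerProductSpace.toDual_apply_apply]
  ring

private lemma stmt17_contDiff {n : ℕ} (x : EuclideanSpace ℝ (Fin n)) (δ lam r L A : ℝ)
    (hδ : 0 < δ) :
    ContDiff ℝ 1 (fun w : EuclideanSpace ℝ (Fin n) =>
        L * Real.sqrt (‖w - x‖^2 + δ) + A * Real.exp (lam * (‖w - x‖^2 - r^2))) := by
  have hq : ContDiff ℝ 1 (fun w : EuclideanSpace ℝ (Fin n) => ‖w - x‖^2) :=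
    (contDiff_norm_sq ℝ).comp (contDiff_id.sub contDiff_const)
  have hs : ContDiff ℝ 1 (fun w : EuclideanSpace ℝ (Fin n) => Real.sqrt (‖w - x‖^2 + δ)) :=
    (hq.add contDiff_const).sqrt (fun w => by positivity)
  exact (contDiff_const.mul hs).add (contDiff_const.mul
    (Real.contDiff_exp.comp (contDiff_const.mul (hq.sub contDiff_const))))


private lemma stmt17_ineq1 (ρ d s σ : ℝ) (hρ0 : 0 ≤ ρ) (hd0 : 0 < d) (hs0 : 0 ≤ s)
    (hsq2 : σ^2 = s^2 + d^2) (hsq3 : ((ρ + 1) * s)^2 < (ρ * σ)^2) : s ≤ ρ * d := by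
  by_contra h
  push_neg at h
  have hss : (ρ * d) * (ρ * d) < s * s := mul_self_lt_mul_self (mul_nonneg hρ0 hd0.le) h
  nlinarith [mul_nonneg hρ0 (mul_nonneg hs0 hs0)]

private lemma stmt17_ineq2 (a d : ℝ) (ha : 0 ≤ a) (hd : 0 ≤ d) : a^2 + d^2 ≤ (a + d)^2 := by
  nlinarith [mul_nonneg ha hd]

private lemma stmt17_ineq3 (L s t d : ℝ) (hL : 0 ≤ L) (h : s ≤ t + d) :
    L * s ≤ L * t + L * d := by nlinarith

set_option maxHeartbeats 1000000 in
/-- A continuous viscosity subsolution of `F(x, Du) ≤ M` on `ℝⁿ`, with `F` continuous and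
coercive in `p` uniformly in `x`, is Lipschitz with constant depending only on `M` and `F`
(namely any bound on the norms of momenta `p` with `F(x,p) ≤ M`). -/
theorem stmt17 {n : ℕ}
    (F : EuclideanSpace ℝ (Fin n) → EuclideanSpace ℝ (Fin n) → ℝ) (M : ℝ)
    (hF : Continuous fun q : EuclideanSpace ℝ (Fin n) × EuclideanSpace ℝ (Fin n) => F q.1 q.2)
    (hcoerc : ∀ R : ℝ, ∃ ρ : ℝ, ∀ x p : EuclideanSpace ℝ (Fin n), ρ ≤ ‖p‖ → R ≤ F x p)
    (u : EuclideanSpace ℝ (Fin n) → ℝ) (hu : Continuous u)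
    (hsub : ∀ φ : EuclideanSpace ℝ (Fin n) → ℝ, ContDiff ℝ 1 φ →
      ∀ x, IsLocalMax (fun y => u y - φ y) x → F x (gradient φ x) ≤ M) :
    ∃ K : NNReal, (∀ x p : EuclideanSpace ℝ (Fin n), F x p ≤ M → ‖p‖ ≤ K) ∧
      LipschitzWith K u := by
  obtain ⟨ρ₀, hρ₀⟩ := hcoerc (M + 1)
  set ρ : ℝ := max ρ₀ 0 with hρdef
  have hρ0 : 0 ≤ ρ := le_max_right _ _
  set L : ℝ := ρ + 1 with hLdef
  have hL0 : 0 < L := by positivity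
  have hρL : ρ < L := by simp [hLdef]
  -- the norm bound
  have hbound : ∀ x p, F x p ≤ M → ‖p‖ ≤ L := by
    intro x p hFp
    by_contra h
    push_neg at h
    have h1 : ρ₀ ≤ ‖p‖ := le_trans (le_max_left _ _) (le_trans hρL.le h.le)
    linarith [hρ₀ x p h1]
  -- the key one-sided Lipschitz estimate
  have key : ∀ x y, u y ≤ u x + L * ‖y - x‖ := by
    intro x y
    refine le_of_forall_pos_le_add fun ε hε => ?_
    set r : ℝ := ‖y - x‖ + 1 with hrdef
    have hyx0 : (0:ℝ) ≤ ‖y - x‖ := norm_nonneg _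
    have hr0 : 0 < r := by positivity
    have hyr : ‖y - x‖ < r := by simp [hrdef]
    obtain ⟨δc, hδc0, hδc⟩ := Metric.continuousAt_iff.mp (hu.continuousAt (x := x)) (ε/3) (by positivity)
    set d : ℝ := min (ε/(3*L)) (δc/(2*L)) with hddef
    have hd0 : 0 < d := lt_min (by positivity) (by positivity)
    set δ : ℝ := d^2 with hδdef
    have hδ0 : 0 < δ := by positivity
    have hLd : L * d ≤ ε/3 := by
      have : d ≤ ε/(3*L) := min_le_left _ _
      calc L * d ≤ L * (ε/(3*L)) := by nlinarith
        _ = ε/3 := by field_simp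
    have hρd : ρ * d < δc := by
      have h1 : d ≤ δc/(2*L) := min_le_right _ _
      have : ρ * d ≤ L * (δc/(2*L)) := by nlinarith
      have h2 : L * (δc/(2*L)) = δc/2 := by field_simp
      linarith
    -- max of u on the closed ball
    obtain ⟨zS, hzSmem, hzS⟩ := (isCompact_closedBall x r).exists_isMaxOn
      ⟨x, Metric.mem_closedBall_self hr0.le⟩ hu.continuousOn
    set S : ℝ := u zS with hSdef
    have hSx : u x ≤ S := hzS (Metric.mem_closedBall_self hr0.le)
    set A : ℝ := S - u x + L * d + 1 with hAdef
    have hA1 : 1 ≤ A := by have := mul_pos hL0 hd0; simp only [hAdef]; linarith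
    have hA0 : 0 < A := by linarith
    -- choose lam
    have hc1 : ‖y - x‖^2 - r^2 < 0 := by nlinarith
    have hc2 : (0:ℝ) - r^2 < 0 := by nlinarith
    have hlim : ∀ c : ℝ, c < 0 →
        Filter.Tendsto (fun lam : ℝ => A * Real.exp (lam * c)) Filter.atTop (nhds 0) := by
      intro c hc
      have h1 : Filter.Tendsto (fun lam : ℝ => lam * c) Filter.atTop Filter.atBot :=
        Filter.Tendsto.atTop_mul_const_of_neg hc Filter.tendsto_id
      have h2 := Real.tendsto_exp_atBot.comp h1
      have := h2.const_mul A
      simpa using this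
    obtain ⟨lam, hlam⟩ := ((((hlim _ hc1).eventually_lt_const (by positivity : (0:ℝ) < ε/3)).and
      ((hlim _ hc2).eventually_lt_const (by norm_num : (0:ℝ) < 1))).and
      (Filter.eventually_gt_atTop 0)).exists
    obtain ⟨⟨hlam1, hlam2⟩, hlam0⟩ := hlam
    -- the test function
    set ψ : EuclideanSpace ℝ (Fin n) → ℝ := fun w =>
      L * Real.sqrt (‖w - x‖^2 + δ) + A * Real.exp (lam * (‖w - x‖^2 - r^2)) with hψdef
    have hψcd : ContDiff ℝ 1 ψ := stmt17_contDiff x δ lam r L A hδ0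
    have hψ0 : ∀ w, 0 ≤ ψ w := by
      intro w
      have h1 : 0 ≤ Real.sqrt (‖w - x‖^2 + δ) := Real.sqrt_nonneg _
      have h2 : 0 < Real.exp (lam * (‖w - x‖^2 - r^2)) := Real.exp_pos _
      simp only [hψdef]
      nlinarith
    have hψx : ψ x = L * d + A * Real.exp (lam * (0 - r^2)) := by
      simp only [hψdef, sub_self, norm_zero]
      rw [show (0:ℝ)^2 + δ = d^2 by rw [hδdef]; ring, Real.sqrt_sq hd0.le]
      norm_num
    -- max of u - ψ on the closed ball
    obtain ⟨z, hzmem, hz⟩ := (isCompact_closedBall x r).exists_isMaxOn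
      ⟨x, Metric.mem_closedBall_self hr0.le⟩ (hu.sub hψcd.continuous).continuousOn
    have hzx := hz (Metric.mem_closedBall_self hr0.le)
    simp only [Set.mem_setOf_eq, Pi.sub_apply] at hzx
    have hzr : ‖z - x‖ ≤ r := by
      have := Metric.mem_closedBall.mp hzmem
      rwa [dist_eq_norm] at this
    -- the max is interior
    have hzint : ‖z - x‖ < r := by
      by_contra h
      push_neg at h
      have heq : ‖z - x‖ = r := le_antisymm hzr h
      have hψz : ψ z = L * Real.sqrt (r^2 + δ) + A := by
        simp only [hψdef, heq]
        rw [sub_self, mul_zero, Real.exp_zero, mul_one]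
      have hSz : u z ≤ S := hzS hzmem
      have hsq : 0 ≤ Real.sqrt (r^2 + δ) := Real.sqrt_nonneg _
      rw [hψx] at hzx
      rw [hψz] at hzx
      nlinarith [hzx]
    have hloc : IsLocalMax (fun w => u w - ψ w) z := by
      refine hz.isLocalMax ?_
      refine Metric.closedBall_mem_nhds_of_mem ?_
      rw [Metric.mem_ball, dist_eq_norm]
      exact hzint
    -- viscosity inequality at z
    have hgrad := stmt17_grad x δ lam r L A hδ0 z
    have hFz : F z (gradient ψ z) ≤ M := hsub ψ hψcd z hloc
    rw [hgrad.gradient] at hFz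
    -- norm of the gradient is < ρ
    set c : ℝ := L * (1 / (2 * Real.sqrt (‖z - x‖^2 + δ)))
        + A * (Real.exp (lam * (‖z - x‖^2 - r^2)) * lam) with hcdef
    have hsqz : 0 < Real.sqrt (‖z - x‖^2 + δ) := Real.sqrt_pos.mpr (by positivity)
    have hexpz : 0 < Real.exp (lam * (‖z - x‖^2 - r^2)) := Real.exp_pos _
    have hexpnn : 0 ≤ A * (Real.exp (lam * (‖z - x‖^2 - r^2)) * lam) :=
      (mul_pos hA0 (mul_pos hexpz hlam0)).le
    have hc0 : 0 < c := by
      have h3 : 0 < L * (1 / (2 * Real.sqrt (‖z - x‖^2 + δ))) := by positivity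
      rw [hcdef]
      exact add_pos_of_pos_of_nonneg h3 hexpnn
    have hGnorm : ‖(2 * c) • (z - x)‖ = 2 * c * ‖z - x‖ := by
      rw [norm_smul, Real.norm_eq_abs, abs_of_pos (by linarith)]
    have hGρ : ‖(2 * c) • (z - x)‖ < ρ₀ := by
      by_contra h
      push_neg at h
      linarith [hρ₀ z _ h]
    have hGρ' : 2 * c * ‖z - x‖ < ρ := by
      rw [← hGnorm]; exact lt_of_lt_of_le hGρ (le_max_left _ _)
    -- deduce z is close to x
    have hzd : ‖z - x‖ ≤ ρ * d := by
      set σ : ℝ := Real.sqrt (‖z - x‖^2 + δ) with hσdef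
      have hs0 : (0:ℝ) ≤ ‖z - x‖ := norm_nonneg _
      have hone : (1 / (2 * σ)) * (2 * σ) = 1 := by
        field_simp
      have hsplit : 2 * c * σ = L * ((1 / (2 * σ)) * (2 * σ))
          + A * (Real.exp (lam * (‖z - x‖^2 - r^2)) * lam) * (2 * σ) := by
        rw [hcdef]; ring
      rw [hone, mul_one] at hsplit
      have h2cσ : L ≤ 2 * c * σ := by
        have := mul_nonneg hexpnn (by linarith : (0:ℝ) ≤ 2 * σ)
        linarith
      have h1 : L * ‖z - x‖ < ρ * σ := by
        have ha : L * ‖z - x‖ ≤ 2 * c * σ * ‖z - x‖ :=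
          mul_le_mul_of_nonneg_right h2cσ hs0
        have hb : 2 * c * ‖z - x‖ * σ < ρ * σ := by
          by_cases hz0 : ‖z - x‖ = 0
          · rw [hz0]
            rw [hz0, mul_zero] at hGρ'
            have hρσ : (0:ℝ) < ρ * σ := mul_pos hGρ' hsqz
            simpa using hρσ
          · exact mul_lt_mul_of_pos_right hGρ' hsqz
        have hcomm : 2 * c * σ * ‖z - x‖ = 2 * c * ‖z - x‖ * σ := by ring
        linarith
      by_contra h
      push_neg at h
      have hsq2 : σ^2 = ‖z - x‖^2 + δ := Real.sq_sqrt (by positivity)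
      have hσnn : 0 ≤ σ := hsqz.le
      have hsq3 : (L * ‖z - x‖)^2 < (ρ * σ)^2 :=
        pow_lt_pow_left₀ h1 (mul_nonneg hL0.le hs0) two_ne_zero
      rw [hLdef] at hsq3
      rw [hδdef] at hsq2
      exact absurd (stmt17_ineq1 ρ d (‖z - x‖) σ hρ0 hd0 hs0 hsq2 hsq3) (not_le.mpr h)
    have hzclose : dist z x < δc := by
      rw [dist_eq_norm]; linarith
    have huz : u z ≤ u x + ε/3 := by
      have := hδc hzclose
      rw [Real.dist_eq] at this
      have := abs_lt.mp this
      linarith [this.1, this.2]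
    -- conclude
    have hymem : y ∈ Metric.closedBall x r := by
      rw [Metric.mem_closedBall, dist_eq_norm]; linarith
    have hy := hz hymem
    simp only [Set.mem_setOf_eq, Pi.sub_apply] at hy
    have hψy : ψ y = L * Real.sqrt (‖y - x‖^2 + δ) + A * Real.exp (lam * (‖y - x‖^2 - r^2)) := rfl
    have hsqy : Real.sqrt (‖y - x‖^2 + δ) ≤ ‖y - x‖ + d := by
      rw [show ‖y - x‖^2 + δ = ‖y - x‖^2 + d^2 by rw [hδdef]]
      have h1 : ‖y - x‖^2 + d^2 ≤ (‖y - x‖ + d)^2 :=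
        stmt17_ineq2 _ _ hyx0 hd0.le
      calc Real.sqrt (‖y - x‖^2 + d^2) ≤ Real.sqrt ((‖y - x‖ + d)^2) := Real.sqrt_le_sqrt h1
        _ = ‖y - x‖ + d := Real.sqrt_sq (by positivity)
    have hexp_y : A * Real.exp (lam * (‖y - x‖^2 - r^2)) < ε/3 := hlam1
    have hψznn : 0 ≤ ψ z := hψ0 z
    -- u y - ψ y ≤ u z - ψ z ≤ u z ≤ u x + ε/3
    have : u y ≤ u x + ε/3 + ψ y := by linarith
    rw [hψy] at this
    have hLy : L * Real.sqrt (‖y - x‖^2 + δ) ≤ L * ‖y - x‖ + L * d :=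
      stmt17_ineq3 _ _ _ _ hL0.le hsqy
    clear_value ψ c A S δ d r L ρ
    linarith
  -- assemble
  refine ⟨⟨L, hL0.le⟩, ?_, ?_⟩
  · intro x p hFp
    exact hbound x p hFp
  · refine LipschitzWith.of_dist_le_mul fun a b => ?_
    rw [Real.dist_eq, dist_eq_norm]
    have h1 : u a - u b ≤ L * ‖a - b‖ := by
      have := key b a
      linarith
    have h2 : u b - u a ≤ L * ‖a - b‖ := by
      have := key a b
      rw [norm_sub_rev] at this
      linarith
    have := abs_sub_le_iff.mpr ⟨h1, h2⟩
    exact this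
end
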